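/- Every element f of the norming set K satisfies ‖f‖_q ≤ 1 in the ℓ_q norm, where q = max_{1 ≤ i ≤ k} log_{m_i}(n_i), provided each m_i ≥ 2 and n_i ≥ m_i. -/

import Mathlib

/-- The minimal subset of `c₀₀(ℕ)` containing `{±e_r*}` and closed, for every
`i` with `1 ≤ i ≤ k`, under the operation sending any family `f_1, …, f_d`
(`d ≤ n i`) of its elements with pairwise disjoint supports to
`(1/m i)(f_1 + ⋯ + f_d)`. -/
inductive KM (m n : ℕ → ℕ) (k : ℕ) : (ℕ →₀ ℝ) → Prop
  | pos (r : ℕ) : KM m n k (Finsupp.single r 1)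
  | neg (r : ℕ) : KM m n k (-Finsupp.single r 1)
  | op (i d : ℕ) (hi1 : 1 ≤ i) (hik : i ≤ k) (f : Fin d → ℕ →₀ ℝ) (hd : d ≤ n i)
      (hmem : ∀ t, KM m n k (f t))
      (hdisj : ∀ t t' : Fin d, t ≠ t' → Disjoint (f t).support (f t').support) :
      KM m n k (((m i : ℝ))⁻¹ • ∑ t, f t)

/-- Every element `f` of the norming set `K = KM m n k` satisfies
`‖f‖_q ≤ 1` in the `ℓ_q` norm, where `q = max_{1 ≤ i ≤ k} log_{m i} (n i)`,
provided each `m i ≥ 2` and `n i ≥ m i`. -/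
theorem stmt3 (m n : ℕ → ℕ) (k : ℕ) (hk : 1 ≤ k)
    (hm : ∀ i, 1 ≤ i → i ≤ k → 2 ≤ m i)
    (hn : ∀ i, 1 ≤ i → i ≤ k → m i ≤ n i)
    (q : ℝ)
    (hq : q = (Finset.Icc 1 k).sup' (Finset.nonempty_Icc.mpr hk)
        (fun i => Real.logb (m i) (n i))) :
    ∀ f : ℕ →₀ ℝ, KM m n k f →
      (∑ l ∈ f.support, |f l| ^ q) ^ (1 / q) ≤ 1 := by
  have hq1 : 1 ≤ q := by
    have h1 : (1:ℕ) ∈ Finset.Icc 1 k := Finset.mem_Icc.mpr ⟨le_rfl, hk⟩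
    have hm1 : (2:ℝ) ≤ m 1 := by exact_mod_cast hm 1 le_rfl hk
    have hn1 : (m 1 : ℝ) ≤ n 1 := by exact_mod_cast hn 1 le_rfl hk
    have hb : (1:ℝ) < m 1 := by linarith
    have hy : (0:ℝ) < n 1 := by linarith
    refine le_trans ?_ (hq ▸ Finset.le_sup' (fun i => Real.logb (m i) (n i)) h1)
    rw [Real.le_logb_iff_rpow_le hb hy, Real.rpow_one]
    exact hn1
  have hq0 : 0 < q := lt_of_lt_of_le one_pos hq1
  intro f hf
  induction hf with
  | pos r =>
    rw [Finsupp.support_single_ne_zero r one_ne_zero, Finset.sum_singleton,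
        Finsupp.single_eq_same, abs_one, Real.one_rpow, Real.one_rpow]
  | neg r =>
    have : (-Finsupp.single r (1:ℝ)).support = {r} := by
      rw [Finsupp.support_neg, Finsupp.support_single_ne_zero r one_ne_zero]
    rw [this, Finset.sum_singleton]
    simp [Real.one_rpow]
  | op i d hi1 hik f hd hmem hdisj ih =>
    have hm2 : (2:ℝ) ≤ m i := by exact_mod_cast hm i hi1 hik
    have hmpos : (0:ℝ) < m i := by linarith
    have hb : (1:ℝ) < m i := by linarith
    have hni : (m i : ℝ) ≤ n i := by exact_mod_cast hn i hi1 hik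
    have hnpos : (0:ℝ) < n i := by linarith
    have hnmq : (n i : ℝ) ≤ (m i : ℝ) ^ q := by
      have hle : Real.logb (m i) (n i) ≤ q :=
        hq ▸ Finset.le_sup' (fun i => Real.logb (m i) (n i))
          (Finset.mem_Icc.mpr ⟨hi1, hik⟩)
      exact (Real.logb_le_iff_le_rpow hb hnpos).mp hle
    set c : ℝ := ((m i : ℝ))⁻¹ with hc
    have hcpos : 0 < c := inv_pos.mpr hmpos
    -- inner sums are ≤ 1
    have hinner : ∀ t, ∑ l ∈ (f t).support, |f t l| ^ q ≤ 1 := by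
      intro t
      have h := ih t
      have hS : 0 ≤ ∑ l ∈ (f t).support, |f t l| ^ q :=
        Finset.sum_nonneg fun l _ => Real.rpow_nonneg (abs_nonneg _) q
      by_contra hlt
      push_neg at hlt
      have : (1:ℝ) < (∑ l ∈ (f t).support, |f t l| ^ q) ^ (1/q) :=
        (Real.one_lt_rpow_iff_of_pos (by linarith)).mpr
          (Or.inl ⟨hlt, by positivity⟩)
      linarith
    set T : Finset ℕ := Finset.univ.biUnion (fun t : Fin d => (f t).support) with hT
    have hsubg : (∑ t, f t).support ⊆ T := by
      intro l hl
      obtain ⟨t, -, ht⟩ := Finsupp.mem_support_finset_sum (s := Finset.univ) (h := f) l hl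
      exact Finset.mem_biUnion.mpr ⟨t, Finset.mem_univ t, ht⟩
    set g : ℕ →₀ ℝ := ∑ t, f t with hg
    have hsub : (c • g).support ⊆ T := Finsupp.support_smul.trans hsubg
    have hrw : ∑ l ∈ (c • g).support, |(c • g) l| ^ q
        = ∑ l ∈ T, |(c • g) l| ^ q := by
      refine Finset.sum_subset hsub ?_
      intro x _ hx
      rw [Finsupp.notMem_support_iff] at hx
      rw [hx, abs_zero, Real.zero_rpow (ne_of_gt hq0)]
    have hdisjT : ((Finset.univ : Finset (Fin d)) : Set (Fin d)).PairwiseDisjoint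
        (fun t => (f t).support) := fun t _ t' _ htt' => hdisj t t' htt'
    have hsplit : ∑ l ∈ T, |(c • g) l| ^ q
        = ∑ t, ∑ l ∈ (f t).support, c ^ q * |f t l| ^ q := by
      rw [hT, Finset.sum_biUnion hdisjT]
      refine Finset.sum_congr rfl fun t _ => Finset.sum_congr rfl fun l hl => ?_
      have hgl : g l = f t l := by
        rw [hg, Finsupp.finset_sum_apply]
        refine Finset.sum_eq_single t (fun t' _ ht' => ?_) (fun h => absurd (Finset.mem_univ t) h)
        have : l ∉ (f t').support := Finset.disjoint_left.mp (hdisj t t' (Ne.symm ht')) hl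
        exact Finsupp.notMem_support_iff.mp this
      rw [Finsupp.smul_apply, hgl, smul_eq_mul, abs_mul, abs_of_pos hcpos,
        Real.mul_rpow hcpos.le (abs_nonneg _)]
    have hbound : ∑ l ∈ (c • g).support, |(c • g) l| ^ q ≤ 1 := by
      rw [hrw, hsplit]
      have h1 : ∑ t : Fin d, ∑ l ∈ (f t).support, c ^ q * |f t l| ^ q
          ≤ ∑ t : Fin d, c ^ q := by
        refine Finset.sum_le_sum fun t _ => ?_
        rw [← Finset.mul_sum]
        calc c ^ q * ∑ l ∈ (f t).support, |f t l| ^ q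
            ≤ c ^ q * 1 := by
              refine mul_le_mul_of_nonneg_left (hinner t) ?_
              exact (Real.rpow_nonneg hcpos.le q)
          _ = c ^ q := mul_one _
      refine h1.trans ?_
      rw [Finset.sum_const, Finset.card_univ, Fintype.card_fin, nsmul_eq_mul]
      have hcq : c ^ q = ((m i : ℝ) ^ q)⁻¹ := by
        rw [hc, Real.inv_rpow hmpos.le]
      rw [hcq]
      have hmq : (0:ℝ) < (m i : ℝ) ^ q := Real.rpow_pos_of_pos hmpos q
      rw [← div_eq_mul_inv, div_le_one hmq]
      calc (d:ℝ) ≤ n i := by exact_mod_cast hd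
        _ ≤ (m i : ℝ) ^ q := hnmq
    have hSnn : 0 ≤ ∑ l ∈ (c • g).support, |(c • g) l| ^ q :=
      Finset.sum_nonneg fun l _ => Real.rpow_nonneg (abs_nonneg _) q
    exact Real.rpow_le_one hSnn hbound (by positivity)
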